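/- arXiv:2112.13506 — 3 statements merged into one kernel-verified Lean document; each statement's English description precedes it below -/
import Mathlib

section
/- The bias-corrected matching estimator τ̂ = (1/n)Σ_i [Ŷ_i^{bc}(1) − Ŷ_i^{bc}(0)], where for treated units Ŷ_i^{bc}(0) = (1/M)Σ_{j∈J⁰_M(i)}(Y_j + μ̂₀(X_i) − μ̂₀(X_j)) (and symmetrically for controls), equals τ̂^{reg} + (1/n)[Σ_{i: D_i=1}(1 + K¹_M(i)/M)R̂_i − Σ_{i: D_i=0}(1 + K⁰_M(i)/M)R̂_i], where τ̂^{reg} = (1/n)Σ_i[μ̂₁(X_i) − μ̂₀(X_i)] and R̂_i = Y_i − μ̂_{D_i}(X_i). -/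
open Finset

lemma sum_swap_card_aux {n : ℕ} (A B : Finset (Fin n)) (J : Fin n → Finset (Fin n))
    (h : ∀ i ∈ A, J i ⊆ B) (g : Fin n → ℝ) :
    ∑ i ∈ A, ∑ j ∈ J i, g j = ∑ j ∈ B, ((A.filter fun i => j ∈ J i).card : ℝ) * g j := by
  calc ∑ i ∈ A, ∑ j ∈ J i, g j
      = ∑ i ∈ A, ∑ j ∈ B, if j ∈ J i then g j else 0 := by
        refine Finset.sum_congr rfl fun i hi => ?_
        rw [Finset.sum_ite_mem, Finset.inter_eq_right.mpr (h i hi)]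
    _ = ∑ j ∈ B, ∑ i ∈ A, if j ∈ J i then g j else 0 := Finset.sum_comm
    _ = ∑ j ∈ B, ((A.filter fun i => j ∈ J i).card : ℝ) * g j := by
        refine Finset.sum_congr rfl fun j _ => ?_
        rw [← Finset.sum_filter, Finset.sum_const, nsmul_eq_mul]

/-- The Abadie–Imbens bias-corrected matching estimator, defined via bias-corrected imputed
potential outcomes, equals the regression estimator plus the weighted sum of residuals with
weights `1 + K_M(i)/M`. -/
theorem biasCorrected_matching_estimator_eq {n : ℕ} (hn : 0 < n) (M : ℕ) (hM : 0 < M)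
    {ξ : Type*} (X : Fin n → ξ) (D : Fin n → Bool) (Y : Fin n → ℝ)
    (muhat0 muhat1 : ξ → ℝ)
    (J0 J1 : Fin n → Finset (Fin n))
    (hJ0sub : ∀ i, D i = true → J0 i ⊆ Finset.univ.filter fun j => D j = false)
    (hJ0card : ∀ i, D i = true → (J0 i).card = M)
    (hJ1sub : ∀ i, D i = false → J1 i ⊆ Finset.univ.filter fun j => D j = true)
    (hJ1card : ∀ i, D i = false → (J1 i).card = M) :
    (1 / n : ℝ) * ∑ i,
        ((if D i then Y i
          else (1 / M : ℝ) * ∑ j ∈ J1 i, (Y j + muhat1 (X i) - muhat1 (X j)))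
        - (if D i then (1 / M : ℝ) * ∑ j ∈ J0 i, (Y j + muhat0 (X i) - muhat0 (X j))
          else Y i))
    = (1 / n : ℝ) * ∑ i, (muhat1 (X i) - muhat0 (X i))
      + (1 / n : ℝ) *
        ((∑ i ∈ Finset.univ.filter fun i => D i = true,
            (1 + ((Finset.univ.filter fun j => D j = false ∧ i ∈ J1 j).card : ℝ) / M)
              * (Y i - muhat1 (X i)))
        - ∑ i ∈ Finset.univ.filter fun i => D i = false,
            (1 + ((Finset.univ.filter fun j => D j = true ∧ i ∈ J0 j).card : ℝ) / M)
              * (Y i - muhat0 (X i))) := by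
  have hMR : (M : ℝ) ≠ 0 := Nat.cast_ne_zero.mpr hM.ne'
  rw [← mul_add]
  congr 1
  set T := Finset.univ.filter fun i : Fin n => D i = true with hT
  set C := Finset.univ.filter fun i : Fin n => D i = false with hC
  have hCeq : (Finset.univ.filter fun i : Fin n => ¬ D i = true) = C := by
    rw [hC]; apply Finset.filter_congr; intro i _; simp
  have hTmem : ∀ i ∈ T, D i = true := fun i hi => (Finset.mem_filter.mp hi).2
  have hCmem : ∀ i ∈ C, D i = false := fun i hi => (Finset.mem_filter.mp hi).2
  -- swap keys
  have key0 : ∑ i ∈ T, ∑ j ∈ J0 i, (Y j - muhat0 (X j))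
      = ∑ i ∈ C, ((Finset.univ.filter fun j => D j = true ∧ i ∈ J0 j).card : ℝ)
          * (Y i - muhat0 (X i)) := by
    rw [sum_swap_card_aux T C J0 (fun i hi => hJ0sub i (hTmem i hi)) _]
    refine Finset.sum_congr rfl fun j _ => ?_
    rw [hT, Finset.filter_filter]
  have key1 : ∑ i ∈ C, ∑ j ∈ J1 i, (Y j - muhat1 (X j))
      = ∑ i ∈ T, ((Finset.univ.filter fun j => D j = false ∧ i ∈ J1 j).card : ℝ)
          * (Y i - muhat1 (X i)) := by
    rw [sum_swap_card_aux C T J1 (fun i hi => hJ1sub i (hCmem i hi)) _]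
    refine Finset.sum_congr rfl fun j _ => ?_
    rw [hC, Finset.filter_filter]
  -- canonical form of the LHS
  have hL : ∑ i : Fin n,
        ((if D i then Y i
          else (1 / M : ℝ) * ∑ j ∈ J1 i, (Y j + muhat1 (X i) - muhat1 (X j)))
        - (if D i then (1 / M : ℝ) * ∑ j ∈ J0 i, (Y j + muhat0 (X i) - muhat0 (X j))
          else Y i))
      = (∑ i ∈ T, (Y i - muhat1 (X i)) + ∑ i ∈ T, (muhat1 (X i) - muhat0 (X i))
          - (1 / M : ℝ) * ∑ i ∈ T, ∑ j ∈ J0 i, (Y j - muhat0 (X j)))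
        + ((1 / M : ℝ) * ∑ i ∈ C, ∑ j ∈ J1 i, (Y j - muhat1 (X j))
          + ∑ i ∈ C, (muhat1 (X i) - muhat0 (X i)) - ∑ i ∈ C, (Y i - muhat0 (X i))) := by
    rw [← Finset.sum_filter_add_sum_filter_not Finset.univ (fun i => D i = true), hCeq]
    congr 1
    · rw [Finset.mul_sum, ← Finset.sum_add_distrib, ← Finset.sum_sub_distrib]
      refine Finset.sum_congr rfl fun i hi => ?_
      have hd := hTmem i hi
      have hsum : ∑ j ∈ J0 i, (Y j + muhat0 (X i) - muhat0 (X j))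
          = (∑ j ∈ J0 i, (Y j - muhat0 (X j))) + (M : ℝ) * muhat0 (X i) := by
        have : ∀ j ∈ J0 i, Y j + muhat0 (X i) - muhat0 (X j)
            = (Y j - muhat0 (X j)) + muhat0 (X i) := fun j _ => by ring
        rw [Finset.sum_congr rfl this, Finset.sum_add_distrib, Finset.sum_const,
          hJ0card i hd, nsmul_eq_mul]
      simp only [hd, if_true, hsum]
      field_simp
      ring
    · rw [Finset.mul_sum, ← Finset.sum_add_distrib, ← Finset.sum_sub_distrib]
      refine Finset.sum_congr rfl fun i hi => ?_
      have hd := hCmem i hi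
      have hsum : ∑ j ∈ J1 i, (Y j + muhat1 (X i) - muhat1 (X j))
          = (∑ j ∈ J1 i, (Y j - muhat1 (X j))) + (M : ℝ) * muhat1 (X i) := by
        have : ∀ j ∈ J1 i, Y j + muhat1 (X i) - muhat1 (X j)
            = (Y j - muhat1 (X j)) + muhat1 (X i) := fun j _ => by ring
        rw [Finset.sum_congr rfl this, Finset.sum_add_distrib, Finset.sum_const,
          hJ1card i hd, nsmul_eq_mul]
      simp only [hd, Bool.false_eq_true, if_false, hsum]
      field_simp
      ring
  -- canonical form of the RHS
  have hR : (∑ i : Fin n, (muhat1 (X i) - muhat0 (X i)))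
        + ((∑ i ∈ T, (1 + ((Finset.univ.filter fun j => D j = false ∧ i ∈ J1 j).card : ℝ) / M)
              * (Y i - muhat1 (X i)))
          - ∑ i ∈ C, (1 + ((Finset.univ.filter fun j => D j = true ∧ i ∈ J0 j).card : ℝ) / M)
              * (Y i - muhat0 (X i)))
      = (∑ i ∈ T, (muhat1 (X i) - muhat0 (X i)) + ∑ i ∈ C, (muhat1 (X i) - muhat0 (X i)))
        + ((∑ i ∈ T, (Y i - muhat1 (X i))
            + (1 / M : ℝ) * ∑ i ∈ T, ((Finset.univ.filter fun j => D j = false ∧ i ∈ J1 j).card : ℝ)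
                * (Y i - muhat1 (X i)))
          - (∑ i ∈ C, (Y i - muhat0 (X i))
            + (1 / M : ℝ) * ∑ i ∈ C, ((Finset.univ.filter fun j => D j = true ∧ i ∈ J0 j).card : ℝ)
                * (Y i - muhat0 (X i)))) := by
    congr 1
    · rw [← Finset.sum_filter_add_sum_filter_not Finset.univ (fun i => D i = true), hCeq]
    · congr 1
      · rw [Finset.mul_sum, ← Finset.sum_add_distrib]
        refine Finset.sum_congr rfl fun i _ => ?_
        field_simp
      · rw [Finset.mul_sum, ← Finset.sum_add_distrib]
        refine Finset.sum_congr rfl fun i _ => ?_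
        field_simp
  rw [hL, hR]
  linear_combination (1 / M : ℝ) * key1 - (1 / M : ℝ) * key0
end

section
/- Let g: [0,∞) → R be twice continuously differentiable with sup_x |x·g''(x)| < ∞. Then for all x > 0 and t ≥ 0, |g(t) − g(x) − g'(x)(t−x)| ≤ 4·((t−x)²/x)·sup_{s>0} |s·g''(s)|. -/
open Set

/-- Weighted Taylor remainder bound (Totik): if `g` is twice continuously differentiable on
`[0,∞)` with `|s·g''(s)| ≤ B` for all `s > 0`, then for all `x > 0` and `t ≥ 0`,
`|g(t) − g(x) − g'(x)(t−x)| ≤ 4 ((t−x)²/x) B`. -/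
theorem totik_weighted_taylor_bound (g g' g'' : ℝ → ℝ) (B : ℝ)
    (hg' : ∀ x ∈ Ici (0 : ℝ), HasDerivWithinAt g (g' x) (Ici 0) x)
    (hg'' : ∀ x ∈ Ici (0 : ℝ), HasDerivWithinAt g' (g'' x) (Ici 0) x)
    (hcont : ContinuousOn g'' (Ici 0))
    (hB : ∀ s : ℝ, 0 < s → |s * g'' s| ≤ B) :
    ∀ x : ℝ, 0 < x → ∀ t : ℝ, 0 ≤ t →
      |g t - g x - g' x * (t - x)| ≤ 4 * ((t - x) ^ 2 / x) * B := by
  intro x hx t ht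
  have hB0 : 0 ≤ B := (abs_nonneg _).trans (hB x hx)
  have hg''bound : ∀ u : ℝ, 0 < u → |g'' u| ≤ B / u := by
    intro u hu
    rw [le_div_iff₀ hu]
    have := hB u hu
    rwa [abs_mul, abs_of_pos hu, mul_comm] at this
  set h : ℝ → ℝ := fun s => g s - g x - g' x * (s - x) with hhdef
  have hhx : h x = 0 := by simp [hhdef]
  have hhd : ∀ u ∈ Ici (0:ℝ), HasDerivWithinAt h (g' u - g' x) (Ici 0) u := by
    intro u hu
    have h1 : HasDerivWithinAt (fun s => g s - g x) (g' u) (Ici 0) u :=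
      (hg' u hu).sub_const _
    have h2 : HasDerivWithinAt (fun s : ℝ => g' x * (s - x)) (g' x) (Ici 0) u := by
      simpa using (((hasDerivWithinAt_id u (Ici (0:ℝ))).sub_const x).const_mul (g' x))
    exact h1.sub h2
  have hgoal : |h t| ≤ 4 * ((t - x) ^ 2 / x) * B := by
    rcases le_or_gt (x/2) t with hcase | hcase
    · -- Case t ≥ x/2 : usual Taylor-Lagrange with |g''| ≤ 2B/x on [x/2, ∞)
      have key : ∀ s ∈ Ici (x/2), |g' s - g' x| ≤ (2*B/x) * |s - x| := by
        intro s hs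
        have hsub : Ici (x/2) ⊆ Ici (0:ℝ) := Ici_subset_Ici.mpr (by linarith)
        have bound : ∀ u ∈ Ici (x/2), ‖g'' u‖ ≤ 2*B/x := by
          intro u hu
          have hu0 : 0 < u := lt_of_lt_of_le (by linarith) hu
          have h1 : |g'' u| ≤ B / u := hg''bound u hu0
          have h2 : B / u ≤ 2*B/x := by
            rw [div_le_div_iff₀ hu0 hx]
            have : x/2 ≤ u := hu
            nlinarith
          exact h1.trans h2
        have := (convex_Ici (x/2)).norm_image_sub_le_of_norm_hasDerivWithin_le
          (f := g') (f' := g'')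
          (fun u hu => (hg'' u (hsub hu)).mono hsub)
          bound (mem_Ici.mpr (by linarith : x/2 ≤ x)) hs
        simpa [Real.norm_eq_abs] using this
      set S : Set ℝ := uIcc x t with hS
      have hSsub : S ⊆ Ici (x/2) := by
        intro s hs
        rcases le_total x t with hxt | hxt
        · rw [hS, uIcc_of_le hxt] at hs; exact mem_Ici.mpr (by linarith [hs.1])
        · rw [hS, uIcc_of_ge hxt] at hs; exact mem_Ici.mpr (by linarith [hs.1])
      have hSsub0 : S ⊆ Ici (0:ℝ) := hSsub.trans (Ici_subset_Ici.mpr (by linarith))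
      have bound2 : ∀ s ∈ S, ‖g' s - g' x‖ ≤ (2*B/x) * |t - x| := by
        intro s hs
        have h1 := key s (hSsub hs)
        have h2 : |s - x| ≤ |t - x| := by
          rcases le_total x t with hxt | hxt
          · rw [hS, uIcc_of_le hxt] at hs
            rw [abs_of_nonneg (by linarith [hs.1]), abs_of_nonneg (by linarith)]
            linarith [hs.2]
          · rw [hS, uIcc_of_ge hxt] at hs
            rw [abs_of_nonpos (by linarith [hs.2]), abs_of_nonpos (by linarith)]
            linarith [hs.1]
        have hc : 0 ≤ 2*B/x := by positivity
        calc ‖g' s - g' x‖ = |g' s - g' x| := rfl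
          _ ≤ (2*B/x) * |s - x| := h1
          _ ≤ (2*B/x) * |t - x| := by exact mul_le_mul_of_nonneg_left h2 hc
      have := (convex_uIcc x t).norm_image_sub_le_of_norm_hasDerivWithin_le
        (f := h) (f' := fun s => g' s - g' x)
        (fun s hs => (hhd s (hSsub0 hs)).mono hSsub0)
        bound2 left_mem_uIcc right_mem_uIcc
      rw [hhx, sub_zero] at this
      have habs : |t - x| * |t - x| = (t - x)^2 := by
        rw [abs_mul_abs_self]; ring
      have e : 2*B/x * |t - x| * |t - x| = 2*((t-x)^2/x)*B := by
        rw [mul_assoc, habs]; field_simp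
      have hnn : 0 ≤ (t-x)^2/x := by positivity
      calc |h t| ≤ 2*B/x * |t - x| * ‖t - x‖ := this
        _ = 2*((t-x)^2/x)*B := e
        _ ≤ 4*((t-x)^2/x)*B := by nlinarith
    · -- Case t < x/2
      have hg'cont : ContinuousOn g' (Ici 0) :=
        fun u hu => (hg'' u hu).continuousWithinAt
      have hIocsub : Ioc (0:ℝ) x ⊆ Ici 0 := fun u hu => le_of_lt hu.1
      -- monotone comparison functions for g'
      have mono_aux : ∀ (ε : ℝ), ε = 1 ∨ ε = -1 →
          MonotoneOn (fun u => ε * g' u + B * Real.log u) (Ioc 0 x) := by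
        intro ε hε
        have hd : ∀ u ∈ Ioo (0:ℝ) x, HasDerivAt (fun u => ε * g' u + B * Real.log u)
            (ε * g'' u + B * u⁻¹) u := by
          intro u hu
          have h1 : HasDerivAt g' (g'' u) u :=
            (hg'' u hu.1.le).hasDerivAt (Ici_mem_nhds hu.1)
          exact (h1.const_mul ε).add ((Real.hasDerivAt_log (ne_of_gt hu.1)).const_mul B)
        apply monotoneOn_of_deriv_nonneg (convex_Ioc 0 x)
        · apply ContinuousOn.add
          · exact (hg'cont.mono hIocsub).const_smul ε
          · apply ContinuousOn.mul continuousOn_const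
            exact Real.continuousOn_log.mono (fun u hu => ne_of_gt hu.1)
        · rw [interior_Ioc]
          exact fun u hu => ((hd u hu).differentiableAt).differentiableWithinAt
        · rw [interior_Ioc]
          intro u hu
          rw [(hd u hu).deriv]
          have h1 : |g'' u| ≤ B / u := hg''bound u hu.1
          have h2 : -(B/u) ≤ g'' u := neg_le_of_abs_le h1
          have h3 : g'' u ≤ B/u := le_of_abs_le h1
          have : B * u⁻¹ = B / u := by ring
          rcases hε with hε | hε <;> rw [hε, this] <;> linarith
      have mono1 := mono_aux 1 (Or.inl rfl)
      have mono2 := mono_aux (-1) (Or.inr rfl)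
      -- the comparison function H
      set c : ℝ := Real.log x + 1 with hc
      set H : ℝ → ℝ := fun u => B * (u * c - u * Real.log u) with hHdef
      have hHd : ∀ u ∈ Ioo (0:ℝ) x, HasDerivAt H (B * (Real.log x - Real.log u)) u := by
        intro u hu
        have h1 : HasDerivAt (fun u : ℝ => u * c - u * Real.log u)
            (c - (Real.log u + 1)) u := by
          have h0 := ((hasDerivAt_id u).mul_const c).sub
            (Real.hasDerivAt_mul_log (ne_of_gt hu.1))
          simp only [id, one_mul] at h0
          exact h0
        have := h1.const_mul B
        refine this.congr_deriv ?_
        rw [hc]; ring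
      have hHcont : Continuous H := by
        apply Continuous.mul continuous_const
        exact (continuous_id.mul continuous_const).sub Real.continuous_mul_log
      have hhcont : ContinuousOn h (Ici 0) :=
        fun u hu => (hhd u hu).continuousWithinAt
      -- monotonicity of h + H and H - h on Icc 0 x
      have mono_main : ∀ (ε : ℝ), ε = 1 ∨ ε = -1 →
          MonotoneOn (fun u => ε * h u + H u) (Icc 0 x) := by
        intro ε hε
        have hIccsub : Icc (0:ℝ) x ⊆ Ici 0 := fun u hu => hu.1
        have hd : ∀ u ∈ Ioo (0:ℝ) x, HasDerivAt (fun u => ε * h u + H u)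
            (ε * (g' u - g' x) + B * (Real.log x - Real.log u)) u := by
          intro u hu
          have h1 : HasDerivAt h (g' u - g' x) u :=
            (hhd u hu.1.le).hasDerivAt (Ici_mem_nhds hu.1)
          exact (h1.const_mul ε).add (hHd u hu)
        apply monotoneOn_of_deriv_nonneg (convex_Icc 0 x)
        · exact ((hhcont.mono hIccsub).const_smul ε).add hHcont.continuousOn
        · rw [interior_Icc]
          exact fun u hu => ((hd u hu).differentiableAt).differentiableWithinAt
        · rw [interior_Icc]
          intro u hu
          rw [(hd u hu).deriv]
          rcases hε with hε | hε
          · have := mono2 ⟨hu.1, hu.2.le⟩ ⟨hx, le_refl x⟩ hu.2.le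
            simp only at this
            rw [hε]; linarith
          · have := mono1 ⟨hu.1, hu.2.le⟩ ⟨hx, le_refl x⟩ hu.2.le
            simp only at this
            rw [hε]; linarith
      have htmem : t ∈ Icc (0:ℝ) x := ⟨ht, by linarith⟩
      have hxmem : x ∈ Icc (0:ℝ) x := ⟨hx.le, le_refl x⟩
      have m1 := mono_main 1 (Or.inl rfl) htmem hxmem (by linarith)
      have m2 := mono_main (-1) (Or.inr rfl) htmem hxmem (by linarith)
      simp only [one_mul, neg_one_mul, hhx] at m1 m2
      -- |h t| ≤ H x - H t ≤ B * (x - t)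
      have hHbound : H x - H t ≤ B * (x - t) := by
        have hlog : 0 ≤ t * (Real.log x - Real.log t) := by
          rcases eq_or_lt_of_le ht with h0 | h0
          · rw [← h0]; ring_nf; simp
          · have : Real.log t ≤ Real.log x := Real.log_le_log h0 (by linarith)
            have : 0 ≤ Real.log x - Real.log t := by linarith
            positivity
        have : H x - H t = B * (x - t) - B * (t * (Real.log x - Real.log t)) := by
          rw [hHdef, hc]; ring
        rw [this]
        nlinarith [mul_nonneg hB0 hlog]
      have habs : |h t| ≤ B * (x - t) := by
        rw [abs_le]
        constructor <;> linarith
      have hfin : B * (x - t) ≤ 4 * ((t - x) ^ 2 / x) * B := by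
        have hrw : 4 * ((t - x) ^ 2 / x) * B = (4 * (t - x) ^ 2 * B) / x := by ring
        rw [hrw, le_div_iff₀ hx]
        nlinarith [mul_nonneg hB0 (mul_nonneg (by linarith : (0:ℝ) ≤ x - t)
          (by linarith : (0:ℝ) ≤ 4*(x-t) - x))]
      linarith
  simpa [hhdef] using hgoal
end

section
/- Let X₁,...,X_N be i.i.d. from a distribution ν₀ on R^d with density bounded below by f_L > 0 on its support and satisfying ν₀(B(z,u) ∩ S₀) ≥ c₀·u^d for all z in a compact set and u ≤ R (with c₀ = f_L·a·V_d). Then for any fixed point x, integer p ≥ 1, and M ≤ N, the conditional p-th moment of the M-th nearest-neighbor distance satisfies E[‖X_{j_M(x)} − x‖^p] ≤ C_p·(M/N)^{p/d}, where X_{j_M(x)} is the M-th nearest neighbor of x among X₁,...,X_N and C_p depends only on p, d, c₀, R. -/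
open MeasureTheory ProbabilityTheory Metric

/-- The `M`-th order statistic (the `M`-th smallest value) of a tuple of reals; applied to the
distances `dist (X i ω) x`, it is the distance from `x` to its `M`-th nearest neighbor. -/
noncomputable def orderStat {N : ℕ} (M : ℕ) (f : Fin N → ℝ) : ℝ :=
  sInf {t : ℝ | M ≤ (Finset.univ.filter (fun i => f i ≤ t)).card}

lemma orderStat_nonneg {N M : ℕ} (hM : 1 ≤ M) {f : Fin N → ℝ} (hf : ∀ i, 0 ≤ f i) :
    0 ≤ orderStat M f := by
  apply Real.sInf_nonneg
  intro s hs
  have : (Finset.univ.filter (fun i => f i ≤ s)).Nonempty := by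
    rw [← Finset.card_pos]; exact lt_of_lt_of_le hM hs
  obtain ⟨i, hi⟩ := this
  exact le_trans (hf i) (Finset.mem_filter.mp hi).2

lemma orderStat_le_iff {N M : ℕ} (hM : 1 ≤ M) (hMN : M ≤ N) (f : Fin N → ℝ) (t : ℝ) :
    orderStat M f ≤ t ↔ M ≤ (Finset.univ.filter (fun i => f i ≤ t)).card := by
  have hN : 0 < N := lt_of_lt_of_le hM hMN
  have huniv : (Finset.univ : Finset (Fin N)).Nonempty := by
    simpa [Finset.univ_nonempty_iff] using Fin.pos_iff_nonempty.mp hN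
  set A : Set ℝ := {s : ℝ | M ≤ (Finset.univ.filter (fun i => f i ≤ s)).card} with hA
  have hAne : A.Nonempty := by
    refine ⟨Finset.univ.sup' huniv f, ?_⟩
    have : (Finset.univ.filter (fun i => f i ≤ Finset.univ.sup' huniv f)) = Finset.univ := by
      apply Finset.filter_true_of_mem
      intro i _
      exact Finset.le_sup' f (Finset.mem_univ i)
    simp only [hA, Set.mem_setOf_eq, this, Finset.card_univ, Fintype.card_fin]
    exact hMN
  have hAbdd : BddBelow A := by
    refine ⟨Finset.univ.inf' huniv f, ?_⟩
    intro s hs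
    have : (Finset.univ.filter (fun i => f i ≤ s)).Nonempty := by
      rw [← Finset.card_pos]; exact lt_of_lt_of_le hM hs
    obtain ⟨i, hi⟩ := this
    exact le_trans (Finset.inf'_le f (Finset.mem_univ i)) (Finset.mem_filter.mp hi).2
  constructor
  · intro h
    by_contra hc
    push_neg at hc
    set B := Finset.univ.filter (fun i => t < f i) with hB
    have hBne : B.Nonempty := by
      rw [Finset.filter_nonempty_iff]
      by_contra hno
      push_neg at hno
      have : (Finset.univ.filter (fun i => f i ≤ t)) = Finset.univ := by
        apply Finset.filter_true_of_mem
        intro i _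
        exact hno i (Finset.mem_univ i)
      rw [this, Finset.card_univ, Fintype.card_fin] at hc
      omega
    set m := B.inf' hBne f with hm
    have htm : t < m := by
      rw [hm, Finset.lt_inf'_iff]
      intro i hi
      exact (Finset.mem_filter.mp hi).2
    have hlow : ∀ s ∈ A, m ≤ s := by
      intro s hs
      by_contra hsm
      push_neg at hsm
      have hsub : (Finset.univ.filter (fun i => f i ≤ s)) ⊆
          (Finset.univ.filter (fun i => f i ≤ t)) := by
        intro i hi
        have hfi : f i ≤ s := (Finset.mem_filter.mp hi).2
        have : i ∉ B := by
          intro hiB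
          exact absurd (le_trans (Finset.inf'_le f hiB) hfi) (not_le.mpr hsm)
        simp only [hB, Finset.mem_filter, Finset.mem_univ, true_and, not_lt] at this
        simp [this]
      have := le_trans hs (Finset.card_le_card hsub)
      omega
    have : m ≤ orderStat M f := le_csInf hAne hlow
    have : t < orderStat M f := lt_of_lt_of_le htm this
    exact absurd h (not_le.mpr this)
  · intro h
    exact csInf_le hAbdd h

set_option maxHeartbeats 2000000 in
/-- Moment bound for nearest-neighbor distances: there is a constant `C` depending only on
`p`, `d`, `c₀`, `R` such that, whenever `X_1,…,X_N` are i.i.d. from a distribution `ν₀`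
supported in a set `S` of diameter at most `R` around `x` and satisfying
`ν₀(B(z,u) ∩ S) ≥ c₀ u^d` for `z ∈ S` and `0 ≤ u ≤ R`, the `p`-th moment of the distance
from `x ∈ S` to its `M`-th nearest neighbor is at most `C (M/N)^{p/d}`. -/
theorem nearest_neighbor_distance_moment_bound
    (d p : ℕ) (hd : 0 < d) (hp : 0 < p) (c₀ R : ℝ) (hc₀ : 0 < c₀) (hR : 0 < R) :
    ∃ C : ℝ, 0 < C ∧
      ∀ (Ω : Type) (_ : MeasurableSpace Ω) (P : Measure Ω), IsProbabilityMeasure P →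
      ∀ (N M : ℕ), 1 ≤ M → M ≤ N →
      ∀ (ν₀ : Measure (EuclideanSpace ℝ (Fin d))), IsProbabilityMeasure ν₀ →
      ∀ (S : Set (EuclideanSpace ℝ (Fin d))) (x : EuclideanSpace ℝ (Fin d)),
        x ∈ S → ν₀ S = 1 → S ⊆ closedBall x R →
        (∀ z ∈ S, ∀ u : ℝ, 0 ≤ u → u ≤ R →
          ENNReal.ofReal (c₀ * u ^ d) ≤ ν₀ (closedBall z u ∩ S)) →
      ∀ (X : Fin N → Ω → EuclideanSpace ℝ (Fin d)), (∀ i, Measurable (X i)) →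
        iIndepFun X P →
        (∀ i, Measure.map (X i) P = ν₀) →
        (∫ ω, (orderStat M (fun i => dist (X i ω) x)) ^ p ∂P)
          ≤ C * ((M : ℝ) / N) ^ ((p : ℝ) / d) := by
  -- constants
  set β : ℝ := 1 - Real.exp (-1) with hβdef
  have hβ0 : 0 < β := by
    have : Real.exp (-1) < 1 := by
      rw [Real.exp_lt_one_iff]; norm_num
    simp only [hβdef]; linarith
  have hβ1 : β < 1 := by
    have : 0 < Real.exp (-1) := Real.exp_pos _
    simp only [hβdef]; linarith
  set n : ℕ := 2 * p with hn
  set K : ℝ := (Nat.factorial n : ℝ) with hK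
  have hK0 : 0 < K := by positivity
  set C : ℝ := (1 + K) * (2 / (β * c₀)) ^ ((p : ℝ) / d) with hC
  have hC0 : 0 < C := by positivity
  refine ⟨C, hC0, ?_⟩
  intro Ω mΩ P hP N M hM hMN ν₀ hν₀ S x hxS hS1 hSball hcorner X hX hind hmap
  have hN0 : 0 < N := lt_of_lt_of_le hM hMN
  have hNR : (0:ℝ) < N := by exact_mod_cast hN0
  have hMR : (1:ℝ) ≤ M := by exact_mod_cast hM
  set D : Ω → ℝ := fun ω => orderStat M (fun i => dist (X i ω) x) with hDdef
  have hD0 : ∀ ω, 0 ≤ D ω := fun ω => orderStat_nonneg hM (fun i => dist_nonneg)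
  -- measurability of D
  have hDmeas : Measurable D := by
    apply measurable_of_Iic
    intro t
    have hset : D ⁻¹' (Set.Iic t)
        = (fun ω => ∑ i : Fin N, if dist (X i ω) x ≤ t then (1:ℕ) else 0) ⁻¹' (Set.Ici M) := by
      ext ω
      simp only [Set.mem_preimage, Set.mem_Iic, Set.mem_Ici, hDdef]
      rw [orderStat_le_iff hM hMN, Finset.card_filter]
    rw [hset]
    have hm : Measurable (fun ω => ∑ i : Fin N, if dist (X i ω) x ≤ t then (1:ℕ) else 0) :=
      Finset.measurable_sum _ fun i _ =>
        Measurable.ite (measurableSet_le ((hX i).dist measurable_const) measurable_const)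
          measurable_const measurable_const
    exact hm measurableSet_Ici
  -- a.e. bound D ≤ R
  have hXR : ∀ i, ∀ᵐ ω ∂P, dist (X i ω) x ≤ R := by
    intro i
    have hball : ν₀ (closedBall x R) = 1 := by
      refine le_antisymm prob_le_one ?_
      rw [← hS1]
      exact measure_mono hSball
    have hpre : P ((X i) ⁻¹' (closedBall x R)) = 1 := by
      rw [← Measure.map_apply (hX i) measurableSet_closedBall, hmap i, hball]
    rw [ae_iff]
    have hcompl : {ω | ¬ dist (X i ω) x ≤ R} = ((X i) ⁻¹' (closedBall x R))ᶜ := by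
      ext ω; simp [Metric.mem_closedBall]
    rw [hcompl]
    rw [prob_compl_eq_zero_iff ((hX i) measurableSet_closedBall)]
    exact hpre
  have hDR : ∀ᵐ ω ∂P, D ω ≤ R := by
    have hall : ∀ᵐ ω ∂P, ∀ i, dist (X i ω) x ≤ R := ae_all_iff.mpr hXR
    filter_upwards [hall] with ω hω
    rw [hDdef]
    rw [orderStat_le_iff hM hMN]
    have : (Finset.univ.filter (fun i => dist (X i ω) x ≤ R)) = Finset.univ :=
      Finset.filter_true_of_mem (fun i _ => hω i)
    rw [this, Finset.card_univ, Fintype.card_fin]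
    exact hMN
  -- tail bound
  have hTail : ∀ t : ℝ, 0 < t → t ≤ R →
      (P {ω | t < D ω}).toReal ≤ Real.exp (M - β * c₀ * N * t ^ d) := by
    intro t ht htR
    set g : EuclideanSpace ℝ (Fin d) → ℝ := fun y => if dist y x ≤ t then 1 else 0
      with hgdef
    have hg : Measurable g :=
      Measurable.ite measurableSet_closedBall measurable_const measurable_const
    set Z : Fin N → Ω → ℝ := fun i ω => g (X i ω) with hZdef
    have hZmeas : ∀ i, Measurable (Z i) := fun i => hg.comp (hX i)
    have hZind : iIndepFun Z P := hind.comp (fun _ => g) (fun _ => hg)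
    have hZ0 : ∀ i ω, 0 ≤ Z i ω := by
      intro i ω; simp only [hZdef, hgdef]; split <;> norm_num
    set q : ℝ := (ν₀ (closedBall x t)).toReal with hq
    have hq1 : q ≤ 1 := by
      rw [hq]
      exact ENNReal.toReal_le_of_le_ofReal zero_le_one (by simpa using prob_le_one)
    have hq0 : 0 ≤ q := ENNReal.toReal_nonneg
    have hqc : c₀ * t ^ d ≤ q := by
      have h1 : ENNReal.ofReal (c₀ * t ^ d) ≤ ν₀ (closedBall x t ∩ S) :=
        hcorner x hxS t ht.le htR
      have h2 : ν₀ (closedBall x t ∩ S) ≤ ν₀ (closedBall x t) :=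
        measure_mono Set.inter_subset_left
      have h3 : ENNReal.ofReal (c₀ * t ^ d) ≤ ν₀ (closedBall x t) := h1.trans h2
      calc c₀ * t ^ d = (ENNReal.ofReal (c₀ * t ^ d)).toReal := by
            rw [ENNReal.toReal_ofReal (by positivity)]
        _ ≤ q := ENNReal.toReal_mono (measure_ne_top _ _) h3
    -- mgf of each Z i at -1
    have hmgf_i : ∀ i : Fin N, mgf (Z i) P (-1) = 1 - β * q := by
      intro i
      have hmeasexp : Measurable fun y => Real.exp (-1 * g y) := (hg.const_mul _).exp
      have : mgf (Z i) P (-1) = ∫ y, Real.exp (-1 * g y) ∂ν₀ := by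
        rw [mgf, ← hmap i, integral_map (hX i).aemeasurable hmeasexp.aestronglyMeasurable]
      rw [this]
      have heq : (fun y => Real.exp (-1 * g y))
          = fun y => 1 + (Real.exp (-1) - 1) * g y := by
        funext y
        simp only [hgdef]
        split <;> simp
      rw [heq]
      have hgint : Integrable g ν₀ := by
        refine ⟨hg.aestronglyMeasurable, HasFiniteIntegral.of_bounded (C := 1) ?_⟩
        filter_upwards with y
        simp only [hgdef]
        split <;> simp
      rw [integral_add (integrable_const 1) (hgint.const_mul _), integral_const,
        integral_const_mul]
      have hintg : ∫ y, g y ∂ν₀ = q := by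
        have : g = Set.indicator (closedBall x t) (fun _ => (1:ℝ)) := by
          funext y
          by_cases hy : dist y x ≤ t
          · rw [Set.indicator_of_mem (Metric.mem_closedBall.mpr hy)]
            simp [hgdef, hy]
          · rw [Set.indicator_of_notMem (fun hc => hy (Metric.mem_closedBall.mp hc))]
            simp [hgdef, hy]
        rw [this, integral_indicator_const _ measurableSet_closedBall]
        simp [hq, Measure.real]
      rw [hintg]
      simp only [Measure.real, measure_univ, ENNReal.toReal_one, smul_eq_mul, one_mul, hβdef]
      ring
    -- sum of Z
    have hSumZ0 : ∀ ω, 0 ≤ (∑ i, Z i) ω := by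
      intro ω
      rw [Finset.sum_apply]
      exact Finset.sum_nonneg fun i _ => hZ0 i ω
    have hInt : Integrable (fun ω => Real.exp (-1 * (∑ i, Z i) ω)) P := by
      refine ⟨?_, HasFiniteIntegral.of_bounded (C := 1) ?_⟩
      · have hm : Measurable (fun ω => ∑ i, Z i ω) :=
          Finset.measurable_sum Finset.univ (fun i _ => hZmeas i)
        have heq : (fun ω => Real.exp (-1 * (∑ i, Z i) ω))
            = fun ω => Real.exp (-1 * ∑ i, Z i ω) := by
          funext ω; rw [Finset.sum_apply]
        rw [heq]
        exact ((hm.const_mul _).exp).aestronglyMeasurable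
      · filter_upwards with ω
        rw [Real.norm_eq_abs, abs_of_pos (Real.exp_pos _)]
        have h1 : -1 * (∑ i, Z i) ω ≤ 0 := by nlinarith [hSumZ0 ω]
        calc Real.exp (-1 * (∑ i, Z i) ω) ≤ Real.exp 0 := Real.exp_le_exp.mpr h1
          _ = 1 := Real.exp_zero
    have hcher := measure_le_le_exp_mul_mgf (X := ∑ i, Z i) (μ := P) ((M:ℝ) - 1)
      (by norm_num : (-1:ℝ) ≤ 0) hInt
    have hmgfsum : mgf (∑ i, Z i) P (-1) = (1 - β * q) ^ N := by
      rw [hZind.mgf_sum hZmeas]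
      rw [Finset.prod_congr rfl (fun i _ => hmgf_i i), Finset.prod_const, Finset.card_univ,
        Fintype.card_fin]
    -- event inclusion
    have hEvent : {ω | t < D ω} ⊆ {ω | (∑ i, Z i) ω ≤ (M:ℝ) - 1} := by
      intro ω hω
      simp only [Set.mem_setOf_eq] at hω ⊢
      have hcard : (Finset.univ.filter (fun i => dist (X i ω) x ≤ t)).card < M := by
        by_contra h'
        push_neg at h'
        have : D ω ≤ t := (orderStat_le_iff hM hMN _ t).mpr h'
        exact absurd hω (not_lt.mpr this)
      have hsum : (∑ i, Z i) ω
          = ((Finset.univ.filter (fun i => dist (X i ω) x ≤ t)).card : ℝ) := by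
        rw [Finset.sum_apply]
        simp only [hZdef, hgdef]
        rw [Finset.sum_boole]
      rw [hsum]
      have : ((Finset.univ.filter (fun i => dist (X i ω) x ≤ t)).card : ℝ) + 1 ≤ M := by
        exact_mod_cast hcard
      linarith
    -- put together
    have hfin1 : P {ω | t < D ω} ≠ ⊤ := measure_ne_top _ _
    have step1 : (P {ω | t < D ω}).toReal ≤ (P {ω | (∑ i, Z i) ω ≤ (M:ℝ) - 1}).toReal :=
      ENNReal.toReal_mono (measure_ne_top _ _) (measure_mono hEvent)
    have hβq0 : 0 ≤ 1 - β * q := by nlinarith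
    have step2 : (1 - β * q) ^ N ≤ Real.exp (-(β * (c₀ * t ^ d))) ^ N := by
      apply pow_le_pow_left₀ hβq0
      have h1 : 1 - β * q ≤ 1 - β * (c₀ * t ^ d) := by nlinarith
      have h2 : 1 - β * (c₀ * t ^ d) ≤ Real.exp (-(β * (c₀ * t ^ d))) := by
        have := Real.add_one_le_exp (-(β * (c₀ * t ^ d)))
        linarith
      linarith
    calc (P {ω | t < D ω}).toReal
        ≤ (P {ω | (∑ i, Z i) ω ≤ (M:ℝ) - 1}).toReal := step1
      _ ≤ Real.exp (-(-1) * ((M:ℝ) - 1)) * mgf (∑ i, Z i) P (-1) := hcher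
      _ = Real.exp ((M:ℝ) - 1) * (1 - β * q) ^ N := by rw [hmgfsum]; norm_num
      _ ≤ Real.exp ((M:ℝ) - 1) * Real.exp (-(β * (c₀ * t ^ d))) ^ N := by
          exact mul_le_mul_of_nonneg_left step2 (Real.exp_pos _).le
      _ = Real.exp ((M:ℝ) - 1 + N * (-(β * (c₀ * t ^ d)))) := by
          rw [← Real.exp_nat_mul, ← Real.exp_add]
      _ ≤ Real.exp (M - β * c₀ * N * t ^ d) := by
          apply Real.exp_le_exp.mpr
          ring_nf
          nlinarith [Real.exp_pos 1]
  -- integrability of D^p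
  have hIntDp : Integrable (fun ω => D ω ^ p) P := by
    refine ⟨((hDmeas.pow_const p)).aestronglyMeasurable,
      HasFiniteIntegral.of_bounded (C := R ^ p) ?_⟩
    filter_upwards [hDR] with ω hω
    rw [Real.norm_eq_abs, abs_of_nonneg (pow_nonneg (hD0 ω) p)]
    exact pow_le_pow_left₀ (hD0 ω) hω p
  have hlayer : ∫ ω, D ω ^ p ∂P
      = ∫ s in Set.Ioi (0:ℝ), (P {ω | s < D ω ^ p}).toReal :=
    hIntDp.integral_eq_integral_meas_lt
      (Filter.Eventually.of_forall fun ω => pow_nonneg (hD0 ω) p)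
  have hM0 : (0:ℝ) < M := lt_of_lt_of_le one_pos hMR
  have hbase : (0:ℝ) < 2 * M / (β * c₀ * N) := by
    exact div_pos (by linarith) (by positivity)
  set A : ℝ := (2 * M / (β * c₀ * N)) ^ ((p:ℝ)/(d:ℝ)) with hAdef
  have hA0 : 0 < A := Real.rpow_pos_of_pos hbase _
  set φ : ℝ → ℝ := fun s => (P {ω | s < D ω ^ p}).toReal with hφdef
  have hφanti : Antitone φ := fun s s' h =>
    ENNReal.toReal_mono (measure_ne_top _ _)
      (measure_mono fun ω hω => lt_of_le_of_lt h hω)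
  have hφmeas : Measurable φ := hφanti.measurable
  have hφ0 : ∀ s, 0 ≤ φ s := fun s => ENNReal.toReal_nonneg
  have hφ1 : ∀ s, φ s ≤ 1 := fun s =>
    ENNReal.toReal_le_of_le_ofReal zero_le_one (by simpa using prob_le_one)
  have hdpos : (0:ℝ) < d := by exact_mod_cast hd
  have hppos : (0:ℝ) < p := by exact_mod_cast hp
  have hAdp : A ^ ((d:ℝ)/(p:ℝ)) = 2 * M / (β * c₀ * N) := by
    have h1 : ((p:ℝ)/d) * ((d:ℝ)/p) = 1 := by field_simp
    rw [hAdef, ← Real.rpow_mul hbase.le, h1, Real.rpow_one]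
  -- pointwise bound on φ beyond A
  have hφbound : ∀ s, A < s → φ s ≤ K * A^2 * s ^ (-2 : ℝ) := by
    intro s hs
    have hs0 : (0:ℝ) < s := lt_trans hA0 hs
    by_cases hsR : s ≤ R ^ p
    · -- main case: use the tail bound
      set u : ℝ := s ^ ((1:ℝ)/p) with hudef
      have hu0 : 0 < u := Real.rpow_pos_of_pos hs0 _
      have huR : u ≤ R := by
        have h1 : s ^ ((1:ℝ)/p) ≤ (R ^ p) ^ ((1:ℝ)/p) :=
          Real.rpow_le_rpow hs0.le hsR (by positivity)
        rwa [← Real.rpow_natCast R p, ← Real.rpow_mul hR.le,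
          mul_one_div, div_self (ne_of_gt hppos), Real.rpow_one] at h1
      have hsub : {ω | s < D ω ^ p} ⊆ {ω | u < D ω} := by
        intro ω hω
        simp only [Set.mem_setOf_eq] at hω ⊢
        have h1 : s ^ ((1:ℝ)/p) < (D ω ^ p) ^ ((1:ℝ)/p) :=
          Real.rpow_lt_rpow hs0.le hω (by positivity)
        rwa [← Real.rpow_natCast (D ω) p, ← Real.rpow_mul (hD0 ω),
          mul_one_div, div_self (ne_of_gt hppos), Real.rpow_one] at h1
      have h1 : φ s ≤ Real.exp (M - β * c₀ * N * u ^ d) :=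
        le_trans (ENNReal.toReal_mono (measure_ne_top _ _) (measure_mono hsub))
          (hTail u hu0 huR)
      have hud : u ^ d = s ^ ((d:ℝ)/p) := by
        rw [hudef, ← Real.rpow_natCast (s ^ ((1:ℝ)/p)) d, ← Real.rpow_mul hs0.le]
        congr 1
        ring
      set r : ℝ := s / A with hrdef
      have hr1 : 1 < r := (one_lt_div hA0).mpr hs
      have hr0 : 0 < r := lt_trans one_pos hr1
      set v : ℝ := r ^ ((d:ℝ)/p) with hvdef
      have hv1 : 1 ≤ v := by
        rw [hvdef, ← Real.one_rpow ((d:ℝ)/p)]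
        exact Real.rpow_le_rpow zero_le_one hr1.le (by positivity)
      have hv0 : 0 < v := lt_of_lt_of_le one_pos hv1
      have hexp : β * c₀ * (N:ℝ) * s ^ ((d:ℝ)/p) = 2 * M * v := by
        have hsAr : s = A * r := by rw [hrdef]; field_simp
        rw [hvdef, hsAr, Real.mul_rpow hA0.le hr0.le, hAdp]
        field_simp
      have h2 : Real.exp ((M:ℝ) - β * c₀ * N * u ^ d) ≤ Real.exp (-v) := by
        apply Real.exp_le_exp.mpr
        rw [hud, hexp]
        nlinarith
      have hfact : v ^ n ≤ K * Real.exp v := by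
        have := Real.pow_div_factorial_le_exp (x := v) hv0.le n
        rw [div_le_iff₀ (by positivity : (0:ℝ) < (n.factorial:ℝ))] at this
        rw [hK]; linarith
      have h3 : Real.exp (-v) ≤ K / v ^ n := by
        rw [Real.exp_neg]
        rw [inv_eq_one_div, div_le_div_iff₀ (Real.exp_pos _) (by positivity)]
        nlinarith
      have hvn : r ^ (2:ℝ) ≤ v ^ n := by
        have hvr : v ^ n = r ^ ((d:ℝ)/p * n) := by
          rw [hvdef, ← Real.rpow_natCast (r ^ ((d:ℝ)/p)) n, ← Real.rpow_mul hr0.le]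
        rw [hvr]
        apply Real.rpow_le_rpow_of_exponent_le hr1.le
        rw [hn]
        push_cast
        have hdp : (d:ℝ)/p * (2*p) = 2*d := by field_simp
        rw [hdp]
        have hd1 : (1:ℝ) ≤ d := by exact_mod_cast hd
        nlinarith
      have h4 : K / v ^ n ≤ K / r ^ (2:ℝ) := by
        apply div_le_div_of_nonneg_left hK0.le (by positivity) hvn
      have h5 : K / r ^ (2:ℝ) = K * A^2 * s ^ (-2:ℝ) := by
        rw [Real.rpow_neg hs0.le]
        rw [show (2:ℝ) = ((2:ℕ):ℝ) by norm_num, Real.rpow_natCast, Real.rpow_natCast]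
        rw [hrdef]
        rw [div_pow]
        field_simp
      calc φ s ≤ Real.exp ((M:ℝ) - β * c₀ * N * u ^ d) := h1
        _ ≤ Real.exp (-v) := h2
        _ ≤ K / v ^ n := h3
        _ ≤ K / r ^ (2:ℝ) := h4
        _ = K * A^2 * s ^ (-2:ℝ) := h5
    · -- s > R^p : φ s = 0
      push_neg at hsR
      have hnull : P {ω | s < D ω ^ p} = 0 := by
        apply measure_mono_null (t := {ω | ¬ D ω ≤ R}) ?_ (ae_iff.mp hDR)
        intro ω hω hcon
        simp only [Set.mem_setOf_eq] at hω
        have : D ω ^ p ≤ R ^ p := pow_le_pow_left₀ (hD0 ω) hcon p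
        linarith
      have : φ s = 0 := by rw [hφdef]; simp [hnull]
      rw [this]
      positivity
  -- assemble the integral bound
  have hIoc : IntegrableOn φ (Set.Ioc 0 A) volume := by
    refine Integrable.mono' (g := fun _ => (1:ℝ))
      (integrableOn_const (hs := measure_Ioc_lt_top.ne)) hφmeas.aestronglyMeasurable ?_
    filter_upwards with s
    rw [Real.norm_eq_abs, abs_of_nonneg (hφ0 s)]
    exact hφ1 s
  have hψint : IntegrableOn (fun s => K * A^2 * s ^ (-2:ℝ)) (Set.Ioi A) volume :=
    (integrableOn_Ioi_rpow_of_lt (by norm_num) hA0).const_mul _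
  have hIoi : IntegrableOn φ (Set.Ioi A) volume := by
    refine Integrable.mono' hψint hφmeas.aestronglyMeasurable ?_
    rw [ae_restrict_iff' measurableSet_Ioi]
    filter_upwards with s hs
    rw [Real.norm_eq_abs, abs_of_nonneg (hφ0 s)]
    exact hφbound s hs
  have hsplit : ∫ s in Set.Ioi (0:ℝ), φ s
      = (∫ s in Set.Ioc 0 A, φ s) + ∫ s in Set.Ioi A, φ s := by
    rw [← Set.Ioc_union_Ioi_eq_Ioi hA0.le]
    exact setIntegral_union (Set.Ioc_disjoint_Ioi le_rfl) measurableSet_Ioi hIoc hIoi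
  have hb1 : ∫ s in Set.Ioc 0 A, φ s ≤ A := by
    calc ∫ s in Set.Ioc 0 A, φ s ≤ ∫ _ in Set.Ioc (0:ℝ) A, (1:ℝ) := by
          apply setIntegral_mono_on hIoc
            (integrableOn_const (hs := measure_Ioc_lt_top.ne)) measurableSet_Ioc
          intro s _
          exact hφ1 s
      _ = A := by
          simp [Real.volume_Ioc, ENNReal.toReal_ofReal hA0.le, hA0.le]
  have hb2 : ∫ s in Set.Ioi A, φ s ≤ K * A := by
    calc ∫ s in Set.Ioi A, φ s ≤ ∫ s in Set.Ioi A, K * A^2 * s ^ (-2:ℝ) := by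
          apply setIntegral_mono_on hIoi hψint measurableSet_Ioi
          intro s hs
          exact hφbound s hs
      _ = K * A^2 * ∫ s in Set.Ioi A, s ^ (-2:ℝ) := by rw [integral_const_mul]
      _ = K * A^2 * A ^ (-1:ℝ) := by
          rw [integral_Ioi_rpow_of_lt (by norm_num) hA0]
          norm_num
      _ = K * A := by
          rw [Real.rpow_neg_one]
          field_simp
  have hAsplit : A = (2/(β*c₀)) ^ ((p:ℝ)/d) * ((M:ℝ)/N) ^ ((p:ℝ)/d) := by
    rw [hAdef, ← Real.mul_rpow (by positivity) (by positivity)]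
    congr 1
    field_simp
  calc ∫ ω, D ω ^ p ∂P = ∫ s in Set.Ioi (0:ℝ), φ s := hlayer
    _ = (∫ s in Set.Ioc 0 A, φ s) + ∫ s in Set.Ioi A, φ s := hsplit
    _ ≤ A + K * A := add_le_add hb1 hb2
    _ = (1 + K) * A := by ring
    _ = C * ((M:ℝ)/N) ^ ((p:ℝ)/d) := by rw [hAsplit, hC]; ring
end
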